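/- Let H be a real inner product space, x : ι → H a family of points, and let C, C' be disjoint nonempty finite subsets of ι. Then Ward's linkage satisfies the centroid formula δ(C,C') = (|C|·|C'|/(|C|+|C'|)) · ‖x̄_C − x̄_{C'}‖², where x̄_C = (1/|C|) ∑_{i∈C} x_i is the centroid of C. -/

import Mathlib

open Finset

/-- The centroid `x̄_C = (1/|C|) ∑_{i∈C} x_i` of the cluster `C`. -/
noncomputable def centroid {ι H : Type*} [NormedAddCommGroup H] [InnerProductSpace ℝ H]
    (x : ι → H) (C : Finset ι) : H :=
  (C.card : ℝ)⁻¹ • ∑ i ∈ C, x i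

/-- The inertia (error sum of squares) `I(C) = ∑_{i∈C} ‖x_i − x̄_C‖²` of the cluster `C`. -/
noncomputable def inertia {ι H : Type*} [NormedAddCommGroup H] [InnerProductSpace ℝ H]
    (x : ι → H) (C : Finset ι) : ℝ :=
  ∑ i ∈ C, ‖x i - centroid x C‖ ^ 2

/-- The similarity sum `S(C) = ∑_{(i,j)∈C×C} ⟨x_i, x_j⟩` of the cluster `C`. -/
noncomputable def simSum {ι H : Type*} [NormedAddCommGroup H] [InnerProductSpace ℝ H]
    (x : ι → H) (C : Finset ι) : ℝ :=
  ∑ i ∈ C, ∑ j ∈ C, (inner ℝ (x i) (x j) : ℝ)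

/-- Ward's linkage `δ(C,C') = I(C ∪ C') − I(C) − I(C')`. -/
noncomputable def ward {ι H : Type*} [DecidableEq ι] [NormedAddCommGroup H]
    [InnerProductSpace ℝ H] (x : ι → H) (C C' : Finset ι) : ℝ :=
  inertia x (C ∪ C') - inertia x C - inertia x C'

lemma sum_eq_card_smul_centroid {ι H : Type*} [NormedAddCommGroup H] [InnerProductSpace ℝ H]
    (x : ι → H) (C : Finset ι) (hC : C.Nonempty) :
    ∑ i ∈ C, x i = (C.card : ℝ) • centroid x C := by
  have hn : (C.card : ℝ) ≠ 0 := Nat.cast_ne_zero.mpr (Finset.card_ne_zero.mpr hC)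
  rw [_root_.centroid, smul_smul, mul_inv_cancel₀ hn, one_smul]

lemma inertia_eq {ι H : Type*} [NormedAddCommGroup H] [InnerProductSpace ℝ H]
    (x : ι → H) (C : Finset ι) (hC : C.Nonempty) :
    inertia x C = (∑ i ∈ C, ‖x i‖ ^ 2) - (C.card : ℝ) * ‖centroid x C‖ ^ 2 := by
  have key : ∑ i ∈ C, (inner ℝ (x i) (centroid x C) : ℝ) = (C.card : ℝ) * ‖centroid x C‖ ^ 2 := by
    rw [← sum_inner, sum_eq_card_smul_centroid x C hC, real_inner_smul_left,
      real_inner_self_eq_norm_sq]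
  have expand : ∀ i ∈ C, ‖x i - centroid x C‖ ^ 2
      = ‖x i‖ ^ 2 - 2 * (inner ℝ (x i) (centroid x C) : ℝ) + ‖centroid x C‖ ^ 2 := by
    intro i _
    rw [norm_sub_sq_real]
  rw [inertia, Finset.sum_congr rfl expand, Finset.sum_add_distrib, Finset.sum_sub_distrib,
    Finset.sum_const, nsmul_eq_mul, ← Finset.mul_sum, key]
  ring

/-- Centroid formula for Ward's linkage:
`δ(C,C') = (|C|·|C'|/(|C|+|C'|)) · ‖x̄_C − x̄_{C'}‖²`. -/
theorem ward_eq_centroid_formula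
    {ι H : Type*} [DecidableEq ι] [NormedAddCommGroup H] [InnerProductSpace ℝ H]
    (x : ι → H) (C C' : Finset ι) (hC : C.Nonempty) (hC' : C'.Nonempty)
    (hdisj : Disjoint C C') :
    ward x C C' =
      (C.card : ℝ) * C'.card / (C.card + C'.card) * ‖centroid x C - centroid x C'‖ ^ 2 := by
  have hn0 : (0:ℝ) < C.card := by exact_mod_cast hC.card_pos
  have hm0 : (0:ℝ) < C'.card := by exact_mod_cast hC'.card_pos
  have hn : (C.card : ℝ) ≠ 0 := ne_of_gt hn0
  have hm : (C'.card : ℝ) ≠ 0 := ne_of_gt hm0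
  have hnm : (C.card : ℝ) + C'.card ≠ 0 := by positivity
  have hUne : (C ∪ C').Nonempty := ⟨hC.choose, Finset.mem_union_left _ hC.choose_spec⟩
  have hcardU : (((C ∪ C').card) : ℝ) = (C.card : ℝ) + C'.card := by
    rw [Finset.card_union_of_disjoint hdisj]; push_cast; ring
  have hU : centroid x (C ∪ C')
      = ((C.card : ℝ) + C'.card)⁻¹ • ((C.card : ℝ) • centroid x C + (C'.card : ℝ) • centroid x C') := by
    rw [_root_.centroid, Finset.sum_union hdisj, sum_eq_card_smul_centroid x C hC,
      sum_eq_card_smul_centroid x C' hC', hcardU]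
  have hsq : ∀ v : H, ‖v‖ ^ 2 = (inner ℝ v v : ℝ) := fun v => (real_inner_self_eq_norm_sq v).symm
  rw [ward, inertia_eq x _ hUne, inertia_eq x _ hC, inertia_eq x _ hC',
    Finset.sum_union hdisj, hcardU, hU, hsq, hsq, hsq, hsq]
  simp only [inner_add_left, inner_add_right, real_inner_smul_left, real_inner_smul_right]
  rw [real_inner_comm (centroid x C') (centroid x C)]
  rw [inner_sub_left, inner_sub_right, inner_sub_right,
    real_inner_comm (centroid x C') (centroid x C)]
  field_simp
  ring
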